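/- Let S ⊆ {-1,0,1}² \ {(0,0)} be a vertically symmetric step set, with associated group generators ξ, η (so η(x,y) = (1/x,y)), δ = ηξ, c(x) = Σ_{(i,-1)∈S} x^{i+1}, f = c/(c∘η) = x², and ψ = ((xy)∘η − xy)/(z·(c∘η)). Then the following identity of rational functions holds: ψ + (ψ∘δ)/(f∘δ) = −(x²/(z·c))·(x − x∘η)·(y − y∘ξ), where x∘η and y∘ξ denote the first coordinate of η(x,y) and second coordinate of ξ(x,y) respectively. -/

import Mathlib

lemma sum_flip_aux (S : Finset (ℤ × ℤ)) (hsym : ∀ i j : ℤ, (i, j) ∈ S ↔ (-i, j) ∈ S)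
    (j : ℤ) (x : ℂ) :
    ∑ q ∈ S.filter (fun q => q.2 = j), (1 / x) ^ q.1 =
      ∑ q ∈ S.filter (fun q => q.2 = j), x ^ q.1 := by
  refine Finset.sum_nbij' (fun q => (-q.1, q.2)) (fun q => (-q.1, q.2)) ?_ ?_ ?_ ?_ ?_
  · rintro ⟨a, b⟩ h
    simp only [Finset.mem_filter] at h ⊢
    exact ⟨(hsym a b).1 h.1, h.2⟩
  · rintro ⟨a, b⟩ h
    simp only [Finset.mem_filter] at h ⊢
    exact ⟨(hsym a b).1 h.1, h.2⟩
  · rintro ⟨a, b⟩ _; simp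
  · rintro ⟨a, b⟩ _; simp
  · rintro ⟨a, b⟩ _
    simp [one_div, inv_zpow, ← zpow_neg]

theorem stmt_9 (S : Finset (ℤ × ℤ))
    (hS : ∀ p ∈ S, p.1 ∈ ({-1, 0, 1} : Finset ℤ) ∧ p.2 ∈ ({-1, 0, 1} : Finset ℤ) ∧ p ≠ (0, 0))
    (hsym : ∀ i j : ℤ, (i, j) ∈ S ↔ (-i, j) ∈ S)
    (hdown : ∃ i, (i, -1) ∈ S) (hup : ∃ i, (i, 1) ∈ S)
    (z : ℂ) (hz : z ≠ 0)
    (ξ η δ : ℂ × ℂ → ℂ × ℂ) (c : ℂ → ℂ) (f ψ : ℂ × ℂ → ℂ)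
    (hξ : ∀ p : ℂ × ℂ, ξ p =
      (p.1, (1 / p.2) * (∑ q ∈ S.filter (fun q => q.2 = -1), p.1 ^ q.1) /
        (∑ q ∈ S.filter (fun q => q.2 = 1), p.1 ^ q.1)))
    (hη : ∀ p : ℂ × ℂ, η p = (1 / p.1, p.2))
    (hδ : ∀ p : ℂ × ℂ, δ p = ξ (η p))
    (hc : ∀ t : ℂ, c t = ∑ q ∈ S.filter (fun q => q.2 = -1), t ^ (q.1 + 1))
    (hf : ∀ p : ℂ × ℂ, f p = p.1 ^ 2)
    (hψ : ∀ p : ℂ × ℂ, ψ p =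
      ((η p).1 * (η p).2 - p.1 * p.2) / (z * c ((η p).1)))
    (x y : ℂ) (hx : x ≠ 0) (hy : y ≠ 0)
    (hBx : (∑ q ∈ S.filter (fun q => q.2 = 1), x ^ q.1) ≠ 0)
    (hB1x : (∑ q ∈ S.filter (fun q => q.2 = 1), (1 / x) ^ q.1) ≠ 0)
    (hcx : c x ≠ 0) (hcx' : c (1 / x) ≠ 0) :
    ψ (x, y) + ψ (δ (x, y)) / f (δ (x, y)) =
      -(x ^ 2 / (z * c x)) * (x - (η (x, y)).1) * (y - (ξ (x, y)).2) := by
  set A : ℂ := ∑ q ∈ S.filter (fun q => q.2 = -1), x ^ q.1 with hA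
  set B : ℂ := ∑ q ∈ S.filter (fun q => q.2 = 1), x ^ q.1 with hB
  have hAflip : (∑ q ∈ S.filter (fun q => q.2 = -1), (1 / x) ^ q.1) = A :=
    sum_flip_aux S hsym (-1) x
  have hBflip : (∑ q ∈ S.filter (fun q => q.2 = 1), (1 / x) ^ q.1) = B :=
    sum_flip_aux S hsym 1 x
  -- c x = x * A, c (1/x) = (1/x) * A
  have hcxA : c x = x * A := by
    rw [hc, hA, Finset.mul_sum]
    refine Finset.sum_congr rfl fun q _ => ?_
    rw [zpow_add_one₀ hx]; ring
  have hx' : (1 : ℂ) / x ≠ 0 := one_div_ne_zero hx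
  have hcx'A : c (1 / x) = (1 / x) * A := by
    rw [hc, ← hAflip, Finset.mul_sum]
    refine Finset.sum_congr rfl fun q _ => ?_
    rw [zpow_add_one₀ hx']; ring
  have hAne : A ≠ 0 := by
    intro h; apply hcx; rw [hcxA, h, mul_zero]
  -- compute the points
  have hηxy : η (x, y) = (1 / x, y) := hη _
  have hξxy : ξ (x, y) = (x, (1 / y) * A / B) := by rw [hξ]
  have hδxy : δ (x, y) = (1 / x, (1 / y) * A / B) := by
    rw [hδ, hηxy, hξ]
    simp only
    rw [hAflip, hBflip]
  have hηδ : η (δ (x, y)) = (x, (1 / y) * A / B) := by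
    rw [hδxy, hη]
    simp [one_div_one_div]
  have hfδ : f (δ (x, y)) = (1 / x) ^ 2 := by rw [hδxy, hf]
  have hψ1 : ψ (x, y) = ((1 / x) * y - x * y) / (z * ((1 / x) * A)) := by
    rw [hψ, hηxy]; simp only; rw [hcx'A]
  have hψ2 : ψ (δ (x, y)) =
      (x * ((1 / y) * A / B) - (1 / x) * ((1 / y) * A / B)) / (z * (x * A)) := by
    rw [hψ, hηδ, hδxy]; simp only; rw [hcxA]
  rw [hψ1, hψ2, hfδ, hηxy, hξxy, hcxA]
  simp only
  set w : ℂ := 1 / y * A / B with hw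
  have e1 : (1 / x * y - x * y) / (z * (1 / x * A)) = (y - x ^ 2 * y) / (z * A) := by
    rw [div_eq_div_iff (by simp [hz, hAne, hx]) (by simp [hz, hAne, hx])]
    field_simp
  have e2 : (x * w - 1 / x * w) / (z * (x * A)) / (1 / x) ^ 2 = (x ^ 2 * w - w) / (z * A) := by
    rw [div_div, div_eq_div_iff (by simp [hz, hAne, hx]) (by simp [hz, hAne, hx])]
    field_simp
  have e3 : -(x ^ 2 / (z * (x * A))) * (x - 1 / x) * (y - w) =
      ((y - x ^ 2 * y) + (x ^ 2 * w - w)) / (z * A) := by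
    rw [eq_div_iff (by simp [hz, hAne, hx])]
    field_simp
    ring
  rw [e1, e2, e3, ← add_div]
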